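/- Let R : (0,∞) → [0,∞) be nonincreasing. Then for every z > 0, ∫_0^∞ (1 − cos(λz))·R(λ) dλ ≥ (1/2)·∫_{π/(2z)}^∞ R(λ) dλ, where both sides are Lebesgue integrals with values in [0,∞]. -/

import Mathlib

open MeasureTheory Real ENNReal

lemma lintegral_Ico_shift17 (f : ℝ → ℝ≥0∞) (a b c : ℝ) :
    ∫⁻ x in Set.Ico (a + c) (b + c), f x = ∫⁻ x in Set.Ico a b, f (x + c) := by
  rw [← lintegral_indicator measurableSet_Ico, ← lintegral_indicator measurableSet_Ico,
    ← lintegral_add_right_eq_self (fun x => (Set.Ico (a + c) (b + c)).indicator f x) c]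
  congr 1
  ext x
  simp only [Set.indicator_apply, Set.mem_Ico, add_le_add_iff_right, add_lt_add_iff_right]

theorem statement17 (R : ℝ → ℝ) (hR0 : ∀ x ∈ Set.Ioi (0 : ℝ), 0 ≤ R x)
    (hRanti : AntitoneOn R (Set.Ioi 0)) (z : ℝ) (hz : 0 < z) :
    (1 / 2) * ∫⁻ l in Set.Ioi (Real.pi / (2 * z)), ENNReal.ofReal (R l) ≤
      ∫⁻ l in Set.Ioi (0 : ℝ), ENNReal.ofReal ((1 - Real.cos (l * z)) * R l) := by
  have hπ := Real.pi_pos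
  set c : ℝ := π / (2 * z) with hc
  set h : ℝ := π / z with hh
  have hh0 : 0 < h := div_pos hπ hz
  have hc0 : 0 < c := div_pos hπ (by linarith)
  have hcz : c * z = π / 2 := by rw [hc]; field_simp
  have hhz : h * z = π := by rw [hh]; field_simp
  set A : ℕ → Set ℝ := fun k => Set.Ico (c + 2 * k * h) (c + (2 * k + 1) * h) with hA
  set B : ℕ → Set ℝ := fun k => Set.Ico (c + (2 * k + 1) * h) (c + (2 * k + 2) * h) with hB
  set I : ℕ → Set ℝ := fun k => Set.Ico (c + 2 * k * h) (c + (2 * k + 2) * h) with hI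
  -- coverage
  have hcov : Set.Ioi c ⊆ ⋃ k, I k := by
    intro x hx
    have hx' : c < x := hx
    set t : ℝ := (x - c) / (2 * h) with ht
    have ht0 : 0 ≤ t := div_nonneg (by linarith) (by linarith)
    have hfl : (0 : ℤ) ≤ ⌊t⌋ := Int.floor_nonneg.2 ht0
    set k : ℕ := ⌊t⌋.toNat with hk
    have hkt : (k : ℝ) = (⌊t⌋ : ℝ) := by
      rw [hk]; exact_mod_cast Int.toNat_of_nonneg hfl
    have h1 : (k : ℝ) ≤ t := by rw [hkt]; exact Int.floor_le t
    have h2 : t < (k : ℝ) + 1 := by rw [hkt]; exact Int.lt_floor_add_one t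
    refine Set.mem_iUnion.2 ⟨k, ?_⟩
    have h2h : 0 < 2 * h := by linarith
    constructor
    · have := (div_le_div_iff₀ h2h h2h).mp (le_refl t)
      nlinarith [(le_div_iff₀ h2h).mp h1]
    · nlinarith [(div_lt_iff₀ h2h).mp h2]
  -- split I k
  have hsplit : ∀ k : ℕ, ∫⁻ l in I k, ENNReal.ofReal (R l) =
      (∫⁻ l in A k, ENNReal.ofReal (R l)) + ∫⁻ l in B k, ENNReal.ofReal (R l) := by
    intro k
    have hIk : I k = A k ∪ B k := by
      simp only [hI, hA, hB]
      exact (Set.Ico_union_Ico_eq_Ico (by nlinarith [Nat.cast_nonneg (α := ℝ) k]) (by nlinarith)).symm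
    rw [hIk]
    exact lintegral_union measurableSet_Ico (by simp only [hA, hB]; exact Set.Ico_disjoint_Ico_same)
  -- B ≤ A
  have hBA : ∀ k : ℕ, (∫⁻ l in B k, ENNReal.ofReal (R l)) ≤ ∫⁻ l in A k, ENNReal.ofReal (R l) := by
    intro k
    have he1 : c + (2 * k + 1) * h = (c + 2 * k * h) + h := by ring
    have he2 : c + (2 * k + 2) * h = (c + (2 * k + 1) * h) + h := by ring
    have hBk : B k = Set.Ico ((c + 2 * k * h) + h) ((c + (2 * k + 1) * h) + h) := by
      simp only [hB]; rw [← he1, ← he2]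
    have hAk : A k = Set.Ico (c + 2 * k * h) (c + (2 * k + 1) * h) := by simp only [hA]
    rw [hBk, lintegral_Ico_shift17, hAk]
    refine setLIntegral_mono' measurableSet_Ico ?_
    intro x hx
    have hx1 : c + 2 * k * h ≤ x := hx.1
    have hx0 : 0 < x := by nlinarith [Nat.cast_nonneg (α := ℝ) k]
    refine ENNReal.ofReal_le_ofReal (hRanti (Set.mem_Ioi.2 hx0) (Set.mem_Ioi.2 (by linarith)) (by linarith))
  -- A ≤ integrand on A
  have hAg : ∀ k : ℕ, (∫⁻ l in A k, ENNReal.ofReal (R l)) ≤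
      ∫⁻ l in A k, ENNReal.ofReal ((1 - Real.cos (l * z)) * R l) := by
    intro k
    refine setLIntegral_mono' measurableSet_Ico ?_
    intro x hx
    have hx1 : c + 2 * k * h ≤ x := hx.1
    have hx2 : x < c + (2 * k + 1) * h := hx.2
    have hx0 : 0 < x := by nlinarith [Nat.cast_nonneg (α := ℝ) k]
    have hcos : Real.cos (x * z) ≤ 0 := by
      have hper : Real.cos (x * z) = Real.cos (x * z - (k : ℤ) * (2 * π)) := by
        rw [← Real.cos_add_int_mul_two_pi (x * z - (k : ℤ) * (2 * π)) k]; ring_nf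
      rw [hper]
      refine Real.cos_nonpos_of_pi_div_two_le_of_le ?_ ?_
      · push_cast
        nlinarith [mul_le_mul_of_nonneg_right hx1 hz.le]
      · push_cast
        nlinarith [mul_le_mul_of_nonneg_right hx2.le hz.le]
    have hRx : 0 ≤ R x := hR0 x (Set.mem_Ioi.2 hx0)
    refine ENNReal.ofReal_le_ofReal ?_
    nlinarith
  -- A disjoint and in Ioi 0
  have hAdisj : Pairwise (Function.onFun Disjoint A) := by
    refine (pairwise_disjoint_on A).2 ?_
    intro m n hmn
    rw [hA]
    refine Set.Ico_disjoint_Ico.2 ?_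
    have : (m : ℝ) + 1 ≤ n := by exact_mod_cast hmn
    refine le_trans (min_le_left _ _) (le_trans ?_ (le_max_right _ _))
    nlinarith
  have hAsub : (⋃ k, A k) ⊆ Set.Ioi (0 : ℝ) := by
    refine Set.iUnion_subset fun k x hx => ?_
    have hx1 : c + 2 * k * h ≤ x := hx.1
    exact Set.mem_Ioi.2 (by nlinarith [Nat.cast_nonneg (α := ℝ) k])
  -- chain
  calc (1 / 2) * ∫⁻ l in Set.Ioi c, ENNReal.ofReal (R l)
      ≤ (1 / 2) * ∑' k, ∫⁻ l in I k, ENNReal.ofReal (R l) := by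
        refine mul_le_mul_right ?_ _
        exact le_trans (lintegral_mono_set hcov) (lintegral_iUnion_le _ _)
    _ = ∑' k, (1 / 2) * ∫⁻ l in I k, ENNReal.ofReal (R l) := ENNReal.tsum_mul_left.symm
    _ ≤ ∑' k, ∫⁻ l in A k, ENNReal.ofReal ((1 - Real.cos (l * z)) * R l) := by
        refine ENNReal.tsum_le_tsum fun k => ?_
        have key : (1 / 2) * ∫⁻ l in I k, ENNReal.ofReal (R l) ≤
            ∫⁻ l in A k, ENNReal.ofReal (R l) := by
          rw [hsplit k]
          calc (1 / 2 : ENNReal) * ((∫⁻ l in A k, ENNReal.ofReal (R l)) + ∫⁻ l in B k, ENNReal.ofReal (R l))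
              ≤ (1 / 2) * ((∫⁻ l in A k, ENNReal.ofReal (R l)) + ∫⁻ l in A k, ENNReal.ofReal (R l)) :=
                mul_le_mul_right (add_le_add_right (hBA k) _) _
            _ = ∫⁻ l in A k, ENNReal.ofReal (R l) := by
                rw [← two_mul, ← mul_assoc, one_div, ENNReal.inv_mul_cancel two_ne_zero ENNReal.ofNat_ne_top, one_mul]
        exact le_trans key (hAg k)
    _ = ∫⁻ l in ⋃ k, A k, ENNReal.ofReal ((1 - Real.cos (l * z)) * R l) :=
        (lintegral_iUnion (fun _ => measurableSet_Ico) hAdisj _).symm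
    _ ≤ ∫⁻ l in Set.Ioi (0 : ℝ), ENNReal.ofReal ((1 - Real.cos (l * z)) * R l) :=
        lintegral_mono_set hAsub
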